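/- arXiv:2109.05600 — 4 statements merged into one kernel-verified Lean document; each statement's English description precedes it below -/
import Mathlib

section
/- For every n ≥ 1, the triple (1, n, 2n+1) is a triangular chord, i.e., there exist three distinct reduced fractions p/q < r/s < u/v with pairwise integer lambda lengths (qr - ps, us - rv, uq - pv) equal to (1, n, 2n+1) in some order. -/
/-- A triple of integers is a triangular chord if it arises as the multiset of
pairwise Farey lambda lengths (qr - ps, us - rv, uq - pv) of three distinct
reduced fractions p/q < r/s < u/v. -/
def IsTriangularChord (A B C : ℤ) : Prop :=
  ∃ p q r s u v : ℤ, 0 < q ∧ 0 < s ∧ 0 < v ∧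
    IsCoprime p q ∧ IsCoprime r s ∧ IsCoprime u v ∧
    (p : ℚ) / q < (r : ℚ) / s ∧ (r : ℚ) / s < (u : ℚ) / v ∧
    ({q * r - p * s, u * s - r * v, u * q - p * v} : Multiset ℤ) = {A, B, C}

/-- For every n ≥ 1, the triple (1, n, 2n+1) is a triangular chord. -/
theorem chord_one_n_two_n_succ (n : ℤ) (hn : 1 ≤ n) :
    IsTriangularChord 1 n (2 * n + 1) := by
  refine ⟨0, 1, 1, 1, 2 * n + 1, n + 1, one_pos, one_pos, by linarith, isCoprime_zero_left.2 isUnit_one, isCoprime_one_left, ⟨-1, 2, by ring⟩, ?_, ?_, ?_⟩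
  · norm_num
  · have hv : (0 : ℚ) < (n : ℚ) + 1 := by
      have : (1 : ℚ) ≤ (n : ℚ) := by exact_mod_cast hn
      linarith
    rw [div_lt_div_iff₀ (by norm_num) (by push_cast; exact hv)]
    push_cast
    have : (1 : ℚ) ≤ (n : ℚ) := by exact_mod_cast hn
    linarith
  · have : (1 : ℤ) * 1 - 0 * 1 = 1 := by ring
    have h2 : (2 * n + 1) * 1 - 1 * (n + 1) = n := by ring
    have h3 : (2 * n + 1) * 1 - 0 * (n + 1) = 2 * n + 1 := by ring
    rw [this, h2, h3]
end

section
/- If (A, B, C) is a triangular chord, i.e., A = qr - ps, B = us - rv, C = uq - pv for reduced fractions p/q < r/s < u/v, then gcd(A, B) divides C, gcd(B, C) divides A, and gcd(A, C) divides B. -/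
lemma chord_gcd_aux (g x y c : ℤ) (h1 : g ∣ x * c) (h2 : g ∣ y * c)
    (h : IsCoprime x y) : g ∣ c := by
  obtain ⟨a, b, hab⟩ := h
  have hc : c = a * (x * c) + b * (y * c) := by
    calc c = (a * x + b * y) * c := by rw [hab, one_mul]
    _ = a * (x * c) + b * (y * c) := by ring
  rw [hc]
  exact dvd_add (h1.mul_left a) (h2.mul_left b)

/-- For a triangular chord A = qr - ps, B = us - rv, C = uq - pv
arising from reduced fractions p/q < r/s < u/v, the gcd of any two of A, B, C
divides the third. -/
theorem chord_gcd_condition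
    (p q r s u v A B C : ℤ) (hq : 0 < q) (hs : 0 < s) (hv : 0 < v)
    (hpq : IsCoprime p q) (hrs : IsCoprime r s) (huv : IsCoprime u v)
    (h1 : (p : ℚ) / q < (r : ℚ) / s) (h2 : (r : ℚ) / s < (u : ℚ) / v)
    (hA : A = q * r - p * s) (hB : B = u * s - r * v) (hC : C = u * q - p * v) :
    (Int.gcd A B : ℤ) ∣ C ∧ (Int.gcd B C : ℤ) ∣ A ∧ (Int.gcd A C : ℤ) ∣ B := by
  have hrC : r * C = u * A + p * B := by subst hA hB hC; ring
  have hsC : s * C = v * A + q * B := by subst hA hB hC; ring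
  have huA : u * A = r * C - p * B := by rw [hrC]; ring
  have hvA : v * A = s * C - q * B := by rw [hsC]; ring
  have hpB : p * B = r * C - u * A := by rw [hrC]; ring
  have hqB : q * B = s * C - v * A := by rw [hsC]; ring
  refine ⟨?_, ?_, ?_⟩
  · exact chord_gcd_aux _ r s C
      (hrC ▸ dvd_add ((Int.gcd_dvd_left A B).mul_left u) ((Int.gcd_dvd_right A B).mul_left p))
      (hsC ▸ dvd_add ((Int.gcd_dvd_left A B).mul_left v) ((Int.gcd_dvd_right A B).mul_left q))
      hrs
  · exact chord_gcd_aux _ u v A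
      (huA ▸ dvd_sub ((Int.gcd_dvd_right B C).mul_left r) ((Int.gcd_dvd_left B C).mul_left p))
      (hvA ▸ dvd_sub ((Int.gcd_dvd_right B C).mul_left s) ((Int.gcd_dvd_left B C).mul_left q))
      huv
  · exact chord_gcd_aux _ p q B
      (hpB ▸ dvd_sub ((Int.gcd_dvd_right A C).mul_left r) ((Int.gcd_dvd_left A C).mul_left u))
      (hqB ▸ dvd_sub ((Int.gcd_dvd_right A C).mul_left s) ((Int.gcd_dvd_left A C).mul_left v))
      hpq
end

section
/- If (A, B, C) is a triangular chord with n = gcd(A, B, C) even, then at least one of A/n, B/n, C/n is even. -/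
lemma coprime_not_both_even {p q : ℤ} (h : IsCoprime p q) :
    ¬((p : ZMod 2) = 0 ∧ (q : ZMod 2) = 0) := by
  rintro ⟨hp, hq⟩
  rw [ZMod.intCast_zmod_eq_zero_iff_dvd] at hp hq
  obtain ⟨x, y, hxy⟩ := h
  have : (2 : ℤ) ∣ 1 := hxy ▸ dvd_add (Dvd.dvd.mul_left hp x) (Dvd.dvd.mul_left hq y)
  norm_num at this

lemma zmod2_eq_one {x : ZMod 2} (h : x = 0 → False) : x = 1 := by
  have : ∀ y : Fin 2, (y = 0 → False) → y = 1 := by decide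
  exact this x h

lemma key_zmod : ∀ p q r s u v : ZMod 2,
    ¬(p = 0 ∧ q = 0) → ¬(r = 0 ∧ s = 0) → ¬(u = 0 ∧ v = 0) →
    v + q = s → u + p = r → u * q - p * v = 0 → False := by
  have : ∀ p q r s u v : Fin 2,
      ¬(p = 0 ∧ q = 0) → ¬(r = 0 ∧ s = 0) → ¬(u = 0 ∧ v = 0) →
      v + q = s → u + p = r → u * q - p * v = 0 → False := by decide
  exact this

/-- If (A,B,C) is a triangular chord whose gcd n = gcd(A,B,C) is even,
then at least one of A/n, B/n, C/n is even. -/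
theorem chord_parity (A B C : ℤ) (h : IsTriangularChord A B C)
    (n : ℤ) (hn : n = Int.gcd A (Int.gcd B C)) (heven : 2 ∣ n) :
    2 ∣ A / n ∨ 2 ∣ B / n ∨ 2 ∣ C / n := by
  by_cases hn0 : n = 0
  · left; simp [hn0]
  obtain ⟨p, q, r, s, u, v, hq, hs, hv, hpq, hrs, huv, _, _, hmul⟩ := h
  set X : ℤ := q * r - p * s with hX
  set Y : ℤ := u * s - r * v with hY
  set Z : ℤ := u * q - p * v with hZ
  by_contra hc
  push_neg at hc
  obtain ⟨hA, hB, hC⟩ := hc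
  have hnA : n ∣ A := hn ▸ Int.gcd_dvd_left _ _
  have hnB : n ∣ B := hn ▸ dvd_trans (Int.gcd_dvd_right _ _) (Int.gcd_dvd_left _ _)
  have hnC : n ∣ C := hn ▸ dvd_trans (Int.gcd_dvd_right _ _) (Int.gcd_dvd_right _ _)
  -- each of X, Y, Z is one of A, B, C
  have hmem : ∀ W : ℤ, W ∈ ({X, Y, Z} : Multiset ℤ) → n ∣ W ∧ ¬ 2 ∣ W / n := by
    intro W hW
    rw [hmul] at hW
    simp only [Multiset.insert_eq_cons, Multiset.mem_cons, Multiset.mem_singleton] at hW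
    rcases hW with h1 | h1 | h1 <;> subst h1
    · exact ⟨hnA, hA⟩
    · exact ⟨hnB, hB⟩
    · exact ⟨hnC, hC⟩
  have hXm := hmem X (by simp)
  have hYm := hmem Y (by simp)
  have hZm := hmem Z (by simp)
  obtain ⟨hnX, hoX⟩ := hXm
  obtain ⟨hnY, hoY⟩ := hYm
  obtain ⟨hnZ, hoZ⟩ := hZm
  have hXe : X = n * (X / n) := (Int.mul_ediv_cancel' hnX).symm
  have hYe : Y = n * (Y / n) := (Int.mul_ediv_cancel' hnY).symm
  have hZe : Z = n * (Z / n) := (Int.mul_ediv_cancel' hnZ).symm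
  set a : ℤ := X / n
  set b : ℤ := Y / n
  set c : ℤ := Z / n
  -- ring identities
  have id1 : X * v + Y * q = Z * s := by rw [hX, hY, hZ]; ring
  have id2 : X * u + Y * p = Z * r := by rw [hX, hY, hZ]; ring
  have id1' : a * v + b * q = c * s := by
    apply mul_left_cancel₀ hn0
    rw [mul_add, ← mul_assoc, ← mul_assoc, ← mul_assoc, ← hXe, ← hYe, ← hZe]
    exact id1
  have id2' : a * u + b * p = c * r := by
    apply mul_left_cancel₀ hn0
    rw [mul_add, ← mul_assoc, ← mul_assoc, ← mul_assoc, ← hXe, ← hYe, ← hZe]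
    exact id2
  -- pass to ZMod 2
  have ha1 : (a : ZMod 2) = 1 := by
    apply zmod2_eq_one
    intro hh
    rw [ZMod.intCast_zmod_eq_zero_iff_dvd] at hh
    exact hoX (by exact_mod_cast hh)
  have hb1 : (b : ZMod 2) = 1 := by
    apply zmod2_eq_one
    intro hh
    rw [ZMod.intCast_zmod_eq_zero_iff_dvd] at hh
    exact hoY (by exact_mod_cast hh)
  have hc1 : (c : ZMod 2) = 1 := by
    apply zmod2_eq_one
    intro hh
    rw [ZMod.intCast_zmod_eq_zero_iff_dvd] at hh
    exact hoZ (by exact_mod_cast hh)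
  have e1 : (v : ZMod 2) + q = s := by
    have := congrArg (fun x : ℤ => (x : ZMod 2)) id1'
    push_cast at this
    rwa [ha1, hb1, hc1, one_mul, one_mul, one_mul] at this
  have e2 : (u : ZMod 2) + p = r := by
    have := congrArg (fun x : ℤ => (x : ZMod 2)) id2'
    push_cast at this
    rwa [ha1, hb1, hc1, one_mul, one_mul, one_mul] at this
  have e3 : (u : ZMod 2) * q - p * v = 0 := by
    have h2Z : (2 : ℤ) ∣ Z := hZe ▸ Dvd.dvd.mul_right heven _
    have : ((Z : ℤ) : ZMod 2) = 0 := by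
      rw [ZMod.intCast_zmod_eq_zero_iff_dvd]; exact_mod_cast h2Z
    rw [hZ] at this; push_cast at this; exact this
  exact key_zmod p q r s u v (coprime_not_both_even hpq) (coprime_not_both_even hrs)
    (coprime_not_both_even huv) e1 e2 e3
end

section
/- Ptolemy relation for Farey lambda lengths: let p/q, r/s, u/v, w/t be four distinct reduced fractions with p/q < r/s < u/v < w/t (vertices of an ideal quadrilateral in cyclic order). Define λ(a/b, c/d) = |ad - bc|. Then λ(p/q, u/v)·λ(r/s, w/t) = λ(p/q, r/s)·λ(u/v, w/t) + λ(r/s, u/v)·λ(p/q, w/t). -/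
/-- Ptolemy relation for Farey lambda lengths λ(a/b, c/d) = |ad - bc|
on an ideal quadrilateral with vertices p/q < r/s < u/v < w/t:
λ(p/q,u/v)·λ(r/s,w/t) = λ(p/q,r/s)·λ(u/v,w/t) + λ(r/s,u/v)·λ(p/q,w/t). -/
theorem farey_ptolemy
    (p q r s u v w t : ℤ) (hq : 0 < q) (hs : 0 < s) (hv : 0 < v) (ht : 0 < t)
    (hpq : IsCoprime p q) (hrs : IsCoprime r s) (huv : IsCoprime u v)
    (hwt : IsCoprime w t)
    (h1 : (p : ℚ) / q < (r : ℚ) / s) (h2 : (r : ℚ) / s < (u : ℚ) / v)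
    (h3 : (u : ℚ) / v < (w : ℚ) / t) :
    |p * v - q * u| * |r * t - s * w|
      = |p * s - q * r| * |u * t - v * w| + |r * v - s * u| * |p * t - q * w| := by
  have h13 := h1.trans h2
  have h24 := h2.trans h3
  have h14 := h13.trans h3
  have key : ∀ a b c d : ℤ, 0 < b → 0 < d → (a : ℚ)/b < (c : ℚ)/d → a*d - b*c < 0 := by
    intro a b c d hb hd h
    rw [div_lt_div_iff₀ (by exact_mod_cast hb) (by exact_mod_cast hd)] at h
    have : (a : ℚ)*d - b*c < 0 := by linarith
    exact_mod_cast this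
  have e1 := key p q r s hq hs h1
  have e2 := key r s u v hs hv h2
  have e3 := key u v w t hv ht h3
  have e4 := key p q u v hq hv h13
  have e5 := key r s w t hs ht h24
  have e6 := key p q w t hq ht h14
  rw [abs_of_neg e1, abs_of_neg e2, abs_of_neg e3, abs_of_neg e4, abs_of_neg e5,
    abs_of_neg e6]
  ring
end
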